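/- Let U, Z be F_q-subspaces of F_{q^s}^n (viewed as an F_q-vector space) with U ∩ Z = {0}, let m ≥ 2, let D+E ∈ F_{q^s}^{mδ×n} have all rows in U, let Δ ∈ F_{q^s}^{δ×n} have δ rows lying in Z that are F_q-linearly independent, let v ∈ (F_q^×)^m be a vector all of whose entries are nonzero, and set Q = (D+E) + v ⊗ Δ. Then for every k ∈ {1,…,m}, the image of the F_q-row space of Q[k] under the projection of U ⊕ Z onto Z along U equals the F_q-span of the rows of Δ; in particular rank_{F_q}(Q[k]) ≥ δ for every k, so no block index is distinguished by a vanishing Z-component. -/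

import Mathlib

/-- CB-cPIR defeats the subquery attack: with all rows of `D+E` in `U`, the `δ` rows of
`Δ` in `Z` `F_q`-linearly independent, `U ∩ Z = {0}`, `m ≥ 2`, `v` of full Hamming
weight, and `Q = (D+E) + v ⊗ Δ`, for every block index `k` the image of the `F_q`-row
space of `Q[k]` under the projection onto `Z` along `U` equals the `F_q`-span of the rows
of `Δ`; in particular `rank_{F_q}(Q[k]) ≥ δ` for every `k`. -/
theorem stmt_10 (q s n m δ : ℕ) (hq : IsPrimePow q) (hm : 2 ≤ m)
    (Fq : Type*) [Field Fq] [Fintype Fq] (hFq : Fintype.card Fq = q)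
    (K : Type*) [Field K] [Algebra Fq K] [FiniteDimensional Fq K]
    (hs : Module.finrank Fq K = s)
    (U Z : Submodule Fq (Fin n → K)) (hUZ : U ⊓ Z = ⊥)
    (DE : Fin m × Fin δ → Fin n → K) (hDE : ∀ p, DE p ∈ U)
    (Δ : Fin δ → Fin n → K) (hΔ : ∀ d, Δ d ∈ Z)
    (hΔind : LinearIndependent Fq Δ)
    (v : Fin m → Fq) (hv : ∀ j, v j ≠ 0)
    (Q : Fin m × Fin δ → Fin n → K)
    (hQ : Q = fun p => DE p + v p.1 • Δ p.2) :
    ∀ k : Fin m,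
      (∀ π : (Fin n → K) →ₗ[Fq] (Fin n → K),
        (∀ x ∈ U, π x = 0) → (∀ x ∈ Z, π x = x) →
        Submodule.map π (Submodule.span Fq
            (Set.range fun p : {j : Fin m // j ≠ k} × Fin δ => Q ((p.1 : Fin m), p.2)))
          = Submodule.span Fq (Set.range Δ)) ∧
      δ ≤ Module.finrank Fq ↥(Submodule.span Fq
          (Set.range fun p : {j : Fin m // j ≠ k} × Fin δ => Q ((p.1 : Fin m), p.2))) := by
  intro k
  haveI : Nontrivial (Fin m) := by
    refine Fin.nontrivial_iff_two_le.mpr hm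
  obtain ⟨j₀, hj₀⟩ := exists_ne k
  have h1 : ∀ π : (Fin n → K) →ₗ[Fq] (Fin n → K),
      (∀ x ∈ U, π x = 0) → (∀ x ∈ Z, π x = x) →
      Submodule.map π (Submodule.span Fq
          (Set.range fun p : {j : Fin m // j ≠ k} × Fin δ => Q ((p.1 : Fin m), p.2)))
        = Submodule.span Fq (Set.range Δ) := by
    intro π hπU hπZ
    have himg : ∀ (j : Fin m) (d : Fin δ), π (Q (j, d)) = v j • Δ d := by
      intro j d
      rw [hQ]
      simp only [map_add, map_smul, hπU _ (hDE (j, d)), hπZ _ (hΔ d), zero_add]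
    apply le_antisymm
    · rw [Submodule.map_span, Submodule.span_le]
      rintro x ⟨y, ⟨p, rfl⟩, rfl⟩
      rw [himg]
      exact Submodule.smul_mem _ _ (Submodule.subset_span ⟨p.2, rfl⟩)
    · rw [Submodule.span_le]
      rintro x ⟨d, rfl⟩
      refine ⟨(v j₀)⁻¹ • Q (j₀, d), ?_, ?_⟩
      · exact Submodule.smul_mem _ _
          (Submodule.subset_span ⟨(⟨j₀, hj₀⟩, d), rfl⟩)
      · rw [map_smul, himg, smul_smul, inv_mul_cancel₀ (hv j₀), one_smul]
  refine ⟨h1, ?_⟩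
  -- construct an actual projection onto a complement of U containing Z
  obtain ⟨W₀, hW₀⟩ := Submodule.exists_isCompl (U ⊔ Z)
  set W : Submodule Fq (Fin n → K) := Z ⊔ W₀ with hWdef
  have hZW : Z ≤ W := le_sup_left
  have hcompl : IsCompl U W := by
    constructor
    · rw [disjoint_iff]
      ext x
      simp only [Submodule.mem_inf, Submodule.mem_bot]
      constructor
      · rintro ⟨hxU, hxW⟩
        rw [hWdef, Submodule.mem_sup] at hxW
        obtain ⟨z, hz, w, hw, rfl⟩ := hxW
        have hwUZ : w ∈ U ⊔ Z := by
          have : w = (z + w) - z := by ring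
          rw [this]
          exact Submodule.sub_mem _ (le_sup_left (a := U) hxU)
            (le_sup_right (a := U) hz)
        have hw0 : w = 0 := by
          have := hW₀.disjoint
          rw [disjoint_iff] at this
          have : w ∈ (⊥ : Submodule Fq (Fin n → K)) := this ▸
            Submodule.mem_inf.mpr ⟨hwUZ, hw⟩
          simpa using this
        subst hw0
        rw [add_zero] at hxU ⊢
        have : z ∈ (⊥ : Submodule Fq (Fin n → K)) := hUZ ▸
          Submodule.mem_inf.mpr ⟨hxU, hz⟩
        simpa using this
      · rintro rfl
        exact ⟨Submodule.zero_mem _, Submodule.zero_mem _⟩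
    · rw [codisjoint_iff]
      rw [hWdef, ← sup_assoc]
      exact codisjoint_iff.mp hW₀.codisjoint
  set π : (Fin n → K) →ₗ[Fq] (Fin n → K) :=
    W.subtype ∘ₗ (Submodule.projectionOnto W U hcompl.symm) with hπdef
  have hπU : ∀ x ∈ U, π x = 0 := by
    intro x hx
    simp [hπdef, Submodule.projectionOnto_apply_right hcompl.symm ⟨x, hx⟩]
  have hπZ : ∀ x ∈ Z, π x = x := by
    intro x hx
    simp [hπdef, Submodule.projectionOnto_apply_left hcompl.symm ⟨x, hZW hx⟩]
  have h2 := h1 π hπU hπZ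
  have hrank : Module.finrank Fq ↥(Submodule.span Fq (Set.range Δ)) = δ := by
    rw [finrank_span_eq_card hΔind, Fintype.card_fin]
  calc δ = Module.finrank Fq ↥(Submodule.span Fq (Set.range Δ)) := hrank.symm
    _ = Module.finrank Fq ↥(Submodule.map π (Submodule.span Fq
          (Set.range fun p : {j : Fin m // j ≠ k} × Fin δ => Q ((p.1 : Fin m), p.2)))) := by
          rw [h2]
    _ ≤ _ := Submodule.finrank_map_le π _
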